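/- Let P be a slant irreducible finite Γ-colored d-complete poset with top tree T, and assume Γ is simply laced and T contains more than one element. Then T has shape Y(i;j,k) for some integers i ≥ 1 and k ≥ j ≥ 1: there exist an element s ∈ T and subsets C₁, C₂ of T such that (1) the set {t ∈ T : t ≥ s} is a chain with i elements whose minimum is s; (2) s covers exactly two elements of T, and these are the maxima of C₁ and C₂ respectively; (3) C₁ and C₂ are disjoint saturated chains in T with |C₁| = j and |C₂| = k, every element of C₁ is incomparable to every element of C₂, and T = {t ∈ T : t ≥ s} ∪ C₁ ∪ C₂. -/

import Mathlib

/-!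
Common definitions: Dynkin diagram data, Γ-colored posets, and the coloring
properties EC, NA, AC, ICE2, UCB1, LCB1 from the paper, together with
Γ-colored d-complete and Γ-colored minuscule posets, top trees, slant
irreducibility, extensions, lower frontier censuses, and full heaps.
-/

universe u v w

variable {Γ : Type u} {P : Type v}

/-- The integers `θ a b` form a Dynkin diagram datum. -/
def DynkinDatum (θ : Γ → Γ → ℤ) : Prop :=
  (∀ a : Γ, θ a a = 2) ∧ (∀ a b : Γ, a ≠ b → θ a b ≤ 0) ∧
    (∀ a b : Γ, a ≠ b → (θ a b = 0 ↔ θ b a = 0))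

/-- Colors `a` and `b` are adjacent. -/
def AdjColor (θ : Γ → Γ → ℤ) (a b : Γ) : Prop := θ a b < 0

/-- The Dynkin diagram is simply laced. -/
def SimplyLaced (θ : Γ → Γ → ℤ) : Prop :=
  ∀ a b : Γ, a ≠ b → θ a b = 0 ∨ θ a b = -1

/-- All closed intervals are finite. -/
def LocallyFinitePoset (α : Type*) [PartialOrder α] : Prop :=
  ∀ x y : α, (Set.Icc x y).Finite

/-- A poset is connected if it cannot be written as a disjoint union of two nonempty
subposets with no comparabilities between them. -/
def ConnectedPoset (α : Type*) [PartialOrder α] : Prop :=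
  ∀ S : Set α, S.Nonempty → Sᶜ.Nonempty → ∃ x ∈ S, ∃ y ∈ Sᶜ, x ≤ y ∨ y ≤ x

section
variable [PartialOrder P]

/-- (EC) Elements with equal colors are comparable. -/
def ColoredEC (κ : P → Γ) : Prop := ∀ x y : P, κ x = κ y → x ≤ y ∨ y ≤ x

/-- (NA) Neighbors have adjacent colors. -/
def ColoredNA (θ : Γ → Γ → ℤ) (κ : P → Γ) : Prop :=
  ∀ x y : P, x ⋖ y → AdjColor θ (κ x) (κ y)

/-- (AC) Elements with adjacent colors are comparable. -/
def ColoredAC (θ : Γ → Γ → ℤ) (κ : P → Γ) : Prop :=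
  ∀ x y : P, AdjColor θ (κ x) (κ y) → x ≤ y ∨ y ≤ x

/-- (ICE2) Between consecutive elements of a color `a`, the census of colors
adjacent to `a` is two. -/
def ColoredICE2 (θ : Γ → Γ → ℤ) (κ : P → Γ) : Prop :=
  ∀ (a : Γ) (x y : P), κ x = a → κ y = a → x < y → (∀ z ∈ Set.Ioo x y, κ z ≠ a) →
    (∑ᶠ z ∈ Set.Ioo x y, -θ (κ z) a) = 2

/-- `U(x,P)`: elements above `x` with color adjacent to that of `x`. -/
def USet (θ : Γ → Γ → ℤ) (κ : P → Γ) (x : P) : Set P :=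
  {y : P | x < y ∧ AdjColor θ (κ y) (κ x)}

/-- `L(x,P)`: elements below `x` with color adjacent to that of `x`. -/
def LSet (θ : Γ → Γ → ℤ) (κ : P → Γ) (x : P) : Set P :=
  {y : P | y < x ∧ AdjColor θ (κ y) (κ x)}

/-- (UCB1) Upper frontier census bound. -/
def ColoredUCB1 (θ : Γ → Γ → ℤ) (κ : P → Γ) : Prop :=
  ∀ x : P, (∀ y : P, κ y = κ x → ¬x < y) →
    (USet θ κ x).Finite ∧ (∑ᶠ y ∈ USet θ κ x, -θ (κ y) (κ x)) ≤ 1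

/-- (LCB1) Lower frontier census bound. -/
def ColoredLCB1 (θ : Γ → Γ → ℤ) (κ : P → Γ) : Prop :=
  ∀ x : P, (∀ y : P, κ y = κ x → ¬y < x) →
    (LSet θ κ x).Finite ∧ (∑ᶠ y ∈ LSet θ κ x, -θ (κ y) (κ x)) ≤ 1

/-- A Γ-colored d-complete poset: locally finite, surjectively colored, and
satisfying EC, NA, AC, ICE2, and UCB1. -/
def GColoredDComplete (θ : Γ → Γ → ℤ) (κ : P → Γ) : Prop :=
  LocallyFinitePoset P ∧ Function.Surjective κ ∧ ColoredEC κ ∧ ColoredNA θ κ ∧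
    ColoredAC θ κ ∧ ColoredICE2 θ κ ∧ ColoredUCB1 θ κ

/-- A Γ-colored minuscule poset: Γ-colored d-complete and LCB1. -/
def GColoredMinuscule (θ : Γ → Γ → ℤ) (κ : P → Γ) : Prop :=
  GColoredDComplete θ κ ∧ ColoredLCB1 θ κ

/-- The top tree: the set of elements maximal in their color class. -/
def TopTree (κ : P → Γ) : Set P := {x : P | ∀ y : P, κ y = κ x → ¬x < y}

/-- `x` is covered by `y` within the subposet `S`. -/
def CoversIn (S : Set P) (x y : P) : Prop :=
  x ∈ S ∧ y ∈ S ∧ x < y ∧ ∀ z ∈ S, x < z → ¬z < y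

/-- Slant irreducibility of a Γ-colored d-complete poset. -/
def SlantIrreducible (κ : P → Γ) : Prop :=
  ConnectedPoset P ∧ ∀ x y : P, CoversIn (TopTree κ) x y → ∃ z : P, z ≠ y ∧ κ z = κ y

/-- A saturated chain in a subposet `S`: a chain that is convex in `S`. -/
def SaturatedChainIn (S C : Set P) : Prop :=
  C ⊆ S ∧ IsChain (· ≤ ·) C ∧ ∀ x ∈ C, ∀ y ∈ C, ∀ z ∈ S, x < z → z < y → z ∈ C

/-- The lower frontier census at the element `y`. -/
noncomputable def LCensus (θ : Γ → Γ → ℤ) (κ : P → Γ) (y : P) : ℤ :=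
  ∑ᶠ x ∈ LSet θ κ y, -θ (κ x) (κ y)

/-- A full heap: locally finite, surjectively colored, EC, NA, AC, ICE2, and every
color class order-isomorphic to ℤ. -/
def FullHeap (θ : Γ → Γ → ℤ) (κ : P → Γ) : Prop :=
  LocallyFinitePoset P ∧ Function.Surjective κ ∧ ColoredEC κ ∧ ColoredNA θ κ ∧
    ColoredAC θ κ ∧ ColoredICE2 θ κ ∧ ∀ a : Γ, Nonempty ({x : P // κ x = a} ≃o ℤ)

end

/-- `ι` realizes the colored poset `A` as an order filter of the colored poset `B`. -/
def FilterEmbedding {G : Type*} {A B : Type*} [PartialOrder A] [PartialOrder B]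
    (κ : A → G) (κ' : B → G) (ι : A → B) : Prop :=
  (∀ p q : A, ι p ≤ ι q ↔ p ≤ q) ∧ (∀ p : A, κ' (ι p) = κ p) ∧ IsUpperSet (Set.range ι)

/-- `B` is an extension of `A` by the color `a`, with extending element `x`. -/
def IsExtensionBy {G : Type*} {A B : Type*} [PartialOrder A] [PartialOrder B]
    (θ : G → G → ℤ) (κ : A → G) (κ' : B → G) (a : G) (ι : A → B) (x : B) : Prop :=
  Finite B ∧ GColoredDComplete θ κ' ∧ ConnectedPoset B ∧
    FilterEmbedding κ κ' ι ∧ (Set.range ι)ᶜ = {x} ∧ κ' x = a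

section YShapeProof
open Classical Finset
attribute [local instance] Classical.propDecidable

variable [PartialOrder P] [Fintype P]

/-- Bundle of hypotheses. -/
structure YC (θ : Γ → Γ → ℤ) (κ : P → Γ) : Prop where
  dyn : DynkinDatum θ
  sl : SimplyLaced θ
  dc : GColoredDComplete θ κ
  si : SlantIrreducible κ

namespace YC

variable {θ : Γ → Γ → ℤ} {κ : P → Γ}

lemma ec (h : YC θ κ) : ColoredEC κ := h.dc.2.2.1
lemma na (h : YC θ κ) : ColoredNA θ κ := h.dc.2.2.2.1
lemma ac (h : YC θ κ) : ColoredAC θ κ := h.dc.2.2.2.2.1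
lemma ice2 (h : YC θ κ) : ColoredICE2 θ κ := h.dc.2.2.2.2.2.1
lemma ucb1 (h : YC θ κ) : ColoredUCB1 θ κ := h.dc.2.2.2.2.2.2
lemma surj (h : YC θ κ) : Function.Surjective κ := h.dc.2.1
lemma conn (h : YC θ κ) : ConnectedPoset P := h.si.1

lemma adj_ne (h : YC θ κ) {a b : Γ} (hab : AdjColor θ a b) : a ≠ b := by
  rintro rfl
  have := h.dyn.1 a
  unfold AdjColor at hab
  omega

lemma adj_neg_one (h : YC θ κ) {a b : Γ} (hab : AdjColor θ a b) : θ a b = -1 := by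
  rcases h.sl a b (h.adj_ne hab) with h0 | h1
  · unfold AdjColor at hab; omega
  · exact h1

lemma adj_symm (h : YC θ κ) {a b : Γ} (hab : AdjColor θ a b) : AdjColor θ b a := by
  have hne := h.adj_ne hab
  have h1 := h.adj_neg_one hab
  have h2 := (h.dyn.2.2 a b hne)
  have h3 := h.dyn.2.1 b a hne.symm
  unfold AdjColor at *
  rcases h.sl b a hne.symm with h4 | h4
  · exfalso; have := h2.mpr h4; omega
  · omega

end YC
end YShapeProof
section YShapeProof2
open Classical Finset
set_option linter.unusedSectionVars false

lemma Set.Finite.exists_maximal_wrt_port {α β : Type*} [PartialOrder β] (f : α → β)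
    (s : Set α) (h : s.Finite) (hs : s.Nonempty) :
    ∃ a ∈ s, ∀ a' ∈ s, f a ≤ f a' → f a = f a' := by
  obtain ⟨a, ha, hm⟩ := h.exists_maximalFor f s hs
  exact ⟨a, ha, fun a' ha' hle => le_antisymm hle (hm ha' hle)⟩

lemma Set.Finite.exists_minimal_wrt_port {α β : Type*} [PartialOrder β] (f : α → β)
    (s : Set α) (h : s.Finite) (hs : s.Nonempty) :
    ∃ a ∈ s, ∀ a' ∈ s, f a' ≤ f a → f a = f a' := by
  obtain ⟨a, ha, hm⟩ := h.exists_minimalFor f s hs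
  exact ⟨a, ha, fun a' ha' hle => le_antisymm (hm ha' hle) hle⟩
attribute [local instance] Classical.propDecidable

variable [PartialOrder P] [Fintype P]

namespace YC
variable {θ : Γ → Γ → ℤ} {κ : P → Γ}

lemma finsum_conv (S : Set P) (f : P → ℤ) :
    (∑ᶠ z ∈ S, f z) = ∑ z ∈ (Set.toFinite S).toFinset, f z := by
  rw [← finsum_mem_coe_finset, Set.Finite.coe_toFinset]

/-- ICE2 census as a cardinality. -/
lemma ice2_card (h : YC θ κ) {a : Γ} {x y : P} (hx : κ x = a) (hy : κ y = a)
    (hxy : x < y) (hcons : ∀ z, x < z → z < y → κ z ≠ a) :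
    (Finset.univ.filter (fun z : P => x < z ∧ z < y ∧ AdjColor θ (κ z) a)).card = 2 := by
  have H := h.ice2 a x y hx hy hxy (fun z hz => hcons z hz.1 hz.2)
  rw [finsum_conv] at H
  have H2 : ∑ z ∈ (Set.toFinite (Set.Ioo x y)).toFinset, -θ (κ z) a
      = ∑ z ∈ (Set.toFinite (Set.Ioo x y)).toFinset,
          (if AdjColor θ (κ z) a then (1:ℤ) else 0) := by
    apply Finset.sum_congr rfl
    intro z hz
    rw [Set.Finite.mem_toFinset, Set.mem_Ioo] at hz
    by_cases hadj : AdjColor θ (κ z) a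
    · rw [if_pos hadj, h.adj_neg_one hadj]; ring
    · rw [if_neg hadj]
      have hne := hcons z hz.1 hz.2
      rcases h.sl (κ z) a hne with h0 | h1
      · omega
      · exfalso; exact hadj (by unfold AdjColor; omega)
  rw [H2, Finset.sum_boole] at H
  have H3 : ((Set.toFinite (Set.Ioo x y)).toFinset.filter
      (fun z => AdjColor θ (κ z) a)).card = 2 := by exact_mod_cast H
  rw [← H3]
  apply congrArg Finset.card
  ext z
  simp only [Finset.mem_filter, Finset.mem_univ, true_and, Set.Finite.mem_toFinset,
    Set.mem_Ioo]
  tauto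

/-- UCB1 census as a cardinality. -/
lemma ucb1_card (h : YC θ κ) {x : P} (hx : x ∈ TopTree κ) :
    (Finset.univ.filter (fun y : P => x < y ∧ AdjColor θ (κ y) (κ x))).card ≤ 1 := by
  have H := (h.ucb1 x hx).2
  rw [show USet θ κ x = {y : P | x < y ∧ AdjColor θ (κ y) (κ x)} from rfl] at H
  rw [finsum_conv] at H
  have H2 : ∑ z ∈ (Set.toFinite {y : P | x < y ∧ AdjColor θ (κ y) (κ x)}).toFinset,
        -θ (κ z) (κ x)
      = ∑ z ∈ (Set.toFinite {y : P | x < y ∧ AdjColor θ (κ y) (κ x)}).toFinset,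
          (if AdjColor θ (κ z) (κ x) then (1:ℤ) else 0) := by
    apply Finset.sum_congr rfl
    intro z hz
    rw [Set.Finite.mem_toFinset] at hz
    rw [if_pos hz.2, h.adj_neg_one hz.2]; ring
  rw [H2, Finset.sum_boole] at H
  have H3 : ((Set.toFinite {y : P | x < y ∧ AdjColor θ (κ y) (κ x)}).toFinset.filter
      (fun z => AdjColor θ (κ z) (κ x))).card ≤ 1 := by exact_mod_cast H
  refine le_trans (le_of_eq ?_) H3
  apply congrArg Finset.card
  ext z
  simp only [Finset.mem_filter, Finset.mem_univ, true_and, Set.Finite.mem_toFinset,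
    Set.mem_setOf_eq]
  tauto

lemma mem_topTree_iff {x : P} : x ∈ TopTree κ ↔ ∀ y, κ y = κ x → ¬ x < y := Iff.rfl

/-- Injectivity of the coloring on the top tree. -/
lemma T_inj (h : YC θ κ) {x y : P} (hx : x ∈ TopTree κ) (hy : y ∈ TopTree κ)
    (hxy : κ x = κ y) : x = y := by
  rcases h.ec x y hxy with hle | hle
  · rcases eq_or_lt_of_le hle with rfl | hlt
    · rfl
    · exact absurd hlt (hx y hxy.symm)
  · rcases eq_or_lt_of_le hle with rfl | hlt
    · rfl
    · exact absurd hlt (hy x hxy)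

/-- Maximum of a color class. -/
lemma colorMax (h : YC θ κ) (a : Γ) :
    ∃ t, κ t = a ∧ t ∈ TopTree κ ∧ ∀ z, κ z = a → z ≤ t := by
  obtain ⟨x0, hx0⟩ := h.surj a
  have hfin : ({z : P | κ z = a}).Finite := Set.toFinite _
  obtain ⟨t, ht, hmax⟩ := Set.Finite.exists_maximal_wrt_port id _ hfin ⟨x0, hx0⟩
  simp only [Set.mem_setOf_eq, id] at ht hmax
  have hle : ∀ z, κ z = a → z ≤ t := by
    intro z hz
    rcases h.ec z t (by rw [hz, ht]) with h1 | h1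
    · exact h1
    · exact le_of_eq (hmax z hz h1).symm
  exact ⟨t, ht, fun y hy hlt => absurd (hmax y (by rw [hy, ht]) hlt.le) (ne_of_lt hlt), hle⟩

end YC
end YShapeProof2
section YShapeProof3
open Classical Finset
set_option linter.unusedSectionVars false
attribute [local instance] Classical.propDecidable

variable [PartialOrder P] [Fintype P]

namespace YC
variable {θ : Γ → Γ → ℤ} {κ : P → Γ}

/-- In a finite poset, `x < y` implies there is a cover step from `x` towards `y`. -/
lemma cover_step {x y : P} (hxy : x < y) : ∃ m, x ⋖ m ∧ m ≤ y := by
  have hfin : (Set.Ioc x y).Finite := Set.toFinite _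
  obtain ⟨m, hm, hmin⟩ := Set.Finite.exists_minimal_wrt_port id _ hfin ⟨y, hxy, le_rfl⟩
  simp only [Set.mem_Ioc, id] at hm hmin
  refine ⟨m, ⟨hm.1, ?_⟩, hm.2⟩
  intro z hz1 hz2
  have : m = z := hmin z ⟨hz1, le_trans hz2.le hm.2⟩ hz2.le
  exact absurd hz2 (this ▸ lt_irrefl m)

/-- A set closed under covers (in both directions) is closed along comparabilities. -/
lemma cross_cover {S : Set P} (hcl : ∀ u v : P, u ⋖ v → (u ∈ S ↔ v ∈ S)) :
    ∀ p q : P, p ≤ q → (p ∈ S ↔ q ∈ S) := by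
  have hwf : WellFounded (fun a b : P => b < a) := (Finite.to_wellFoundedGT).wf
  intro p
  induction p using hwf.induction with
  | _ p IH =>
    intro q hpq
    rcases eq_or_lt_of_le hpq with rfl | hlt
    · rfl
    · obtain ⟨m, hcov, hmy⟩ := cover_step hlt
      exact (hcl p m hcov).trans (IH m hcov.1 q hmy)

/-- Connected finite Γ-colored d-complete posets have a maximum. -/
lemma exists_top (h : YC θ κ) [Nonempty P] : ∃ tp : P, ∀ z : P, z ≤ tp := by
  obtain ⟨x, -, hmax⟩ := Set.Finite.exists_maximal_wrt_port id (Set.univ : Set P)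
    (Set.toFinite _) ⟨Classical.arbitrary P, trivial⟩
  simp only [Set.mem_univ, id, forall_true_left, true_implies] at hmax
  have hxmax : ∀ z, x ≤ z → x = z := fun z hz => hmax z hz
  -- good colors
  set G : Set Γ := {a | ∀ z, κ z = a → z ≤ x} with hG
  have hxG : κ x ∈ G := by
    intro z hz
    rcases h.ec z x hz with h1 | h1
    · exact h1
    · exact le_of_eq (hxmax z h1).symm
  have hclosure : ∀ b c, b ∈ G → AdjColor θ c b → c ∈ G := by
    intro b c hb hadj
    obtain ⟨t, htb, htT, htle⟩ := h.colorMax b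
    have htx : t ≤ x := hb t htb
    intro z hz
    have hcomp : z ≤ t ∨ t ≤ z := by
      apply h.ac
      rw [hz, htb]; exact hadj
    rcases hcomp with h1 | h1
    · exact le_trans h1 htx
    · rcases eq_or_lt_of_le h1 with rfl | hlt
      · exact htx
      · -- t < z
        rcases eq_or_lt_of_le htx with rfl | htxlt
        · exact absurd (hxmax z hlt.le) (ne_of_lt hlt)
        · obtain ⟨r, hcov, hrx⟩ := cover_step htxlt
          have hradj : AdjColor θ (κ r) (κ t) := h.adj_symm (h.na t r hcov)
          have hcard := h.ucb1_card htT
          have hzmem : z ∈ Finset.univ.filter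
              (fun y : P => t < y ∧ AdjColor θ (κ y) (κ t)) := by
            simp only [Finset.mem_filter, Finset.mem_univ, true_and]
            exact ⟨hlt, by rw [hz, htb]; exact hadj⟩
          have hrmem : r ∈ Finset.univ.filter
              (fun y : P => t < y ∧ AdjColor θ (κ y) (κ t)) := by
            simp only [Finset.mem_filter, Finset.mem_univ, true_and]
            exact ⟨hcov.1, hradj⟩
          have : z = r := Finset.card_le_one.mp hcard z hzmem r hrmem
          exact this ▸ hrx
  -- the preimage of G is closed under covers, hence everything lies below x
  have hcov : ∀ u v : P, u ⋖ v → (κ u ∈ G ↔ κ v ∈ G) := by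
    intro u v huv
    have hadj := h.na u v huv
    exact ⟨fun hu => hclosure _ _ hu (h.adj_symm hadj), fun hv => hclosure _ _ hv hadj⟩
  have hall : ∀ p : P, κ p ∈ G := by
    by_contra hcon
    push_neg at hcon
    obtain ⟨q0, hq0⟩ := hcon
    have hSne : ({p : P | κ p ∈ G}).Nonempty := ⟨x, hxG⟩
    have hScne : ({p : P | κ p ∈ G})ᶜ.Nonempty := ⟨q0, hq0⟩
    obtain ⟨p, hp, q, hq, hcomp⟩ := h.conn _ hSne hScne
    have := cross_cover (S := {p : P | κ p ∈ G}) hcov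
    rcases hcomp with h1 | h1
    · exact hq ((this p q h1).mp hp)
    · exact hq ((this q p h1).mpr hp)
  exact ⟨x, fun z => hall z z rfl⟩

/-- Uniqueness of elements above a top-tree element with adjacent color. -/
lemma uset_unique (h : YC θ κ) {x y z : P} (hx : x ∈ TopTree κ)
    (hy : x < y) (hya : AdjColor θ (κ y) (κ x))
    (hz : x < z) (hza : AdjColor θ (κ z) (κ x)) : y = z := by
  have hcard := h.ucb1_card hx
  have hym : y ∈ Finset.univ.filter (fun w : P => x < w ∧ AdjColor θ (κ w) (κ x)) := by
    simp only [Finset.mem_filter, Finset.mem_univ, true_and]; exact ⟨hy, hya⟩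
  have hzm : z ∈ Finset.univ.filter (fun w : P => x < w ∧ AdjColor θ (κ w) (κ x)) := by
    simp only [Finset.mem_filter, Finset.mem_univ, true_and]; exact ⟨hz, hza⟩
  exact Finset.card_le_one.mp hcard y hym z hzm

/-- `m` is a child of `t` in the top tree. -/
def ChildOf (θ : Γ → Γ → ℤ) (κ : P → Γ) (m t : P) : Prop :=
  m ∈ TopTree κ ∧ t ∈ TopTree κ ∧ m ⋖ t ∧ ∀ y, m < y → t ≤ y

/-- Every non-maximal top tree element has a parent. -/
lemma parent (h : YC θ κ) {x w : P} (hx : x ∈ TopTree κ) (hxw : x < w) :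
    ∃ u, ChildOf θ κ x u ∧ u ≤ w := by
  obtain ⟨u, hcov, huw⟩ := cover_step hxw
  have huadj : AdjColor θ (κ u) (κ x) := h.adj_symm (h.na x u hcov)
  have hmin : ∀ y, x < y → u ≤ y := by
    intro y hy
    obtain ⟨m, hmcov, hmy⟩ := cover_step hy
    have : u = m := h.uset_unique hx hcov.1 huadj hmcov.1 (h.adj_symm (h.na x m hmcov))
    exact this ▸ hmy
  have huT : u ∈ TopTree κ := by
    obtain ⟨t, htc, htT, htle⟩ := h.colorMax (κ u)
    have htu : u ≤ t := htle u rfl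
    rcases eq_or_lt_of_le htu with rfl | hlt
    · exact htT
    · have : u = t := h.uset_unique hx hcov.1 huadj (lt_trans hcov.1 hlt)
        (by rw [htc]; exact huadj)
      exact this ▸ htT
  exact ⟨u, ⟨hx, huT, hcov, hmin⟩, huw⟩

lemma parent_unique (h : YC θ κ) {x u v : P} (hu : ChildOf θ κ x u)
    (hv : ChildOf θ κ x v) : u = v :=
  le_antisymm (hu.2.2.2 v hv.2.2.1.1) (hv.2.2.2 u hu.2.2.1.1)

/-- Elements of the top tree above a common element are comparable. -/
lemma upchain (h : YC θ κ) :
    ∀ x, x ∈ TopTree κ → ∀ y ∈ TopTree κ, ∀ z ∈ TopTree κ,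
      x ≤ y → x ≤ z → y ≤ z ∨ z ≤ y := by
  have hwf : WellFounded (fun a b : P => b < a) := (Finite.to_wellFoundedGT).wf
  intro x
  induction x using hwf.induction with
  | _ x IH =>
    intro hx y hy z hz hxy hxz
    rcases eq_or_lt_of_le hxy with rfl | hxy'
    · exact Or.inl hxz
    rcases eq_or_lt_of_le hxz with rfl | hxz'
    · exact Or.inr hxy
    obtain ⟨u, hchild, huy⟩ := h.parent hx hxy'
    exact IH u hchild.2.2.1.1 hchild.2.1 y hy z hz huy (hchild.2.2.2 z hxz')

end YC
end YShapeProof3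
section YShapeProof4
open Classical Finset
set_option linter.unusedSectionVars false
attribute [local instance] Classical.propDecidable

variable [PartialOrder P] [Fintype P]

/-- `t'` is the second-highest element of the color class of `t`. -/
def IsSecond (κ : P → Γ) (t' t : P) : Prop :=
  κ t' = κ t ∧ t' < t ∧ ∀ z, κ z = κ t → z ≠ t → z ≤ t'

namespace YC
variable {θ : Γ → Γ → ℤ} {κ : P → Γ}

lemma second_exists (h : YC θ κ) {t : P} (ht : t ∈ TopTree κ)
    (hz : ∃ z, κ z = κ t ∧ z ≠ t) : ∃ t', IsSecond κ t' t := by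
  obtain ⟨z0, hz0, hz0t⟩ := hz
  have hfin : ({z : P | κ z = κ t ∧ z ≠ t}).Finite := Set.toFinite _
  obtain ⟨t', ht', hmax⟩ := Set.Finite.exists_maximal_wrt_port id _ hfin ⟨z0, hz0, hz0t⟩
  simp only [Set.mem_setOf_eq, id] at ht' hmax
  have hlt : t' < t := by
    rcases h.ec t' t ht'.1 with h1 | h1
    · exact lt_of_le_of_ne h1 ht'.2
    · rcases eq_or_lt_of_le h1 with h2 | h2
      · exact absurd h2.symm ht'.2
      · exact absurd h2 (ht t' ht'.1)
  refine ⟨t', ht'.1, hlt, ?_⟩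
  intro z hzc hzt
  rcases h.ec z t' (by rw [hzc, ht'.1]) with h1 | h1
  · exact h1
  · exact le_of_eq (hmax z ⟨hzc, hzt⟩ h1).symm

lemma second_unique (h : YC θ κ) {t t₁ t₂ : P} (h₁ : IsSecond κ t₁ t)
    (h₂ : IsSecond κ t₂ t) : t₁ = t₂ :=
  le_antisymm (h₂.2.2 t₁ h₁.1 (ne_of_lt h₁.2.1)) (h₁.2.2 t₂ h₂.1 (ne_of_lt h₂.2.1))

lemma slant_second (h : YC θ κ) {m t : P} (hc : ChildOf θ κ m t) :
    ∃ t', IsSecond κ t' t := by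
  have hcov : CoversIn (TopTree κ) m t := by
    refine ⟨hc.1, hc.2.1, hc.2.2.1.1, ?_⟩
    intro z _ hmz hzt
    exact absurd (lt_of_lt_of_le hzt (hc.2.2.2 z hmz)) (lt_irrefl z)
  obtain ⟨z, hzt, hzc⟩ := h.si.2 m t hcov
  exact h.second_exists hc.2.1 ⟨z, hzc, hzt⟩

lemma gap_card (h : YC θ κ) {t t' : P} (ht : t ∈ TopTree κ) (hsec : IsSecond κ t' t) :
    (Finset.univ.filter
      (fun z : P => t' < z ∧ z < t ∧ AdjColor θ (κ z) (κ t))).card = 2 := by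
  apply h.ice2_card hsec.1 rfl hsec.2.1
  intro z hz1 hz2 hzc
  exact absurd (lt_of_lt_of_le hz1 (hsec.2.2 z hzc (ne_of_lt hz2))) (lt_irrefl t')

lemma child_mem_gap (h : YC θ κ) {m t t' : P} (hc : ChildOf θ κ m t)
    (hsec : IsSecond κ t' t) :
    t' < m ∧ m < t ∧ AdjColor θ (κ m) (κ t) := by
  have hadj : AdjColor θ (κ m) (κ t) := h.na m t hc.2.2.1
  refine ⟨?_, hc.2.2.1.1, hadj⟩
  have hcomp : t' ≤ m ∨ m ≤ t' := by
    apply h.ac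
    rw [hsec.1]; exact h.adj_symm hadj
  have hne : κ m ≠ κ t' := by rw [hsec.1]; exact h.adj_ne hadj
  rcases hcomp with h1 | h1
  · exact lt_of_le_of_ne h1 (fun e => hne (e ▸ rfl))
  · exfalso
    have hmt : m < t' := lt_of_le_of_ne h1 (fun e => hne (e ▸ rfl))
    exact absurd (lt_of_lt_of_le hsec.2.1 (hc.2.2.2 t' hmt)) (lt_irrefl t')

lemma child_of_adj_below (h : YC θ κ) {w u : P} (hw : w ∈ TopTree κ)
    (hu : u ∈ TopTree κ) (hlt : w < u) (hadj : AdjColor θ (κ w) (κ u)) :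
    ChildOf θ κ w u := by
  obtain ⟨p, hp, -⟩ := h.parent hw hlt
  have : p = u := h.uset_unique hw hp.2.2.1.1 (h.adj_symm (h.na w p hp.2.2.1)) hlt
    (h.adj_symm hadj)
  exact this ▸ hp

lemma children_incomp (h : YC θ κ) {m₁ m₂ t : P} (h₁ : ChildOf θ κ m₁ t)
    (h₂ : ChildOf θ κ m₂ t) (hne : m₁ ≠ m₂) : ¬ m₁ ≤ m₂ := by
  intro hle
  have : t ≤ m₂ := h₁.2.2.2 m₂ (lt_of_le_of_ne hle hne)
  exact absurd (lt_of_lt_of_le h₂.2.2.1.1 this) (lt_irrefl m₂)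

/-- If the census gap of `t` contains two distinct elements, those are all of it. -/
lemma gap_two (h : YC θ κ) {t t' a b : P} (ht : t ∈ TopTree κ) (hsec : IsSecond κ t' t)
    (ha : t' < a ∧ a < t ∧ AdjColor θ (κ a) (κ t))
    (hb : t' < b ∧ b < t ∧ AdjColor θ (κ b) (κ t)) (hab : a ≠ b) :
    ∀ z, t' < z → z < t → AdjColor θ (κ z) (κ t) → z = a ∨ z = b := by
  intro z hz1 hz2 hz3
  have hcard := h.gap_card ht hsec
  have hsub : ({a, b} : Finset P) ⊆ Finset.univ.filter
      (fun z : P => t' < z ∧ z < t ∧ AdjColor θ (κ z) (κ t)) := by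
    intro w hw
    simp only [Finset.mem_insert, Finset.mem_singleton] at hw
    simp only [Finset.mem_filter, Finset.mem_univ, true_and]
    rcases hw with rfl | rfl
    · exact ha
    · exact hb
  have hcard2 : ({a, b} : Finset P).card = 2 := Finset.card_pair hab
  have heq := Finset.eq_of_subset_of_card_le hsub (by rw [hcard, hcard2])
  have hzm : z ∈ ({a, b} : Finset P) := by
    rw [heq]
    simp only [Finset.mem_filter, Finset.mem_univ, true_and]
    exact ⟨hz1, hz2, hz3⟩
  simpa using hzm

/-- The two-children rigidity: a node with a parent satisfying the J-property
has at most one child. -/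
lemma alpha (h : YC θ κ) {t u t' c₁ c₂ : P} (hu : ChildOf θ κ t u)
    (hsec : IsSecond κ t' t) (hJ : ∃ y, κ y = κ u ∧ t' < y ∧ y < t)
    (h₁ : ChildOf θ κ c₁ t) (h₂ : ChildOf θ κ c₂ t) : c₁ = c₂ := by
  by_contra hne
  obtain ⟨y, hyc, hy1, hy2⟩ := hJ
  have hyadj : AdjColor θ (κ y) (κ t) := by
    rw [hyc]; exact h.adj_symm (h.na t u hu.2.2.1)
  have ht : t ∈ TopTree κ := hu.1
  have := h.gap_two ht hsec (h.child_mem_gap h₁ hsec) (h.child_mem_gap h₂ hsec) hne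
    y hy1 hy2 hyadj
  rcases this with h' | h'
  · have he : c₁ = u := h.T_inj h₁.1 hu.2.1 (h' ▸ hyc)
    have hlt := lt_trans h₁.2.2.1.1 hu.2.2.1.1
    rw [he] at hlt
    exact lt_irrefl u hlt
  · have he : c₂ = u := h.T_inj h₂.1 hu.2.1 (h' ▸ hyc)
    have hlt := lt_trans h₂.2.2.1.1 hu.2.2.1.1
    rw [he] at hlt
    exact lt_irrefl u hlt

/-- Key induction: below a branch node every node with a child has the J-property. -/
lemma J_below_branch (h : YC θ κ) {s c₁ c₂ : P} (h₁ : ChildOf θ κ c₁ s)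
    (h₂ : ChildOf θ κ c₂ s) (hcne : c₁ ≠ c₂) :
    ∀ t, t ∈ TopTree κ → t < s → (∃ c, ChildOf θ κ c t) →
      ∀ t' u, IsSecond κ t' t → ChildOf θ κ t u →
        ∃ y, κ y = κ u ∧ t' < y ∧ y < t := by
  have hwf : WellFounded (fun a b : P => b < a) := (Finite.to_wellFoundedGT).wf
  intro t
  induction t using hwf.induction with
  | _ t IH =>
    intro htT hts hchild t' u hsec hu
    have hs : s ∈ TopTree κ := h₁.2.1
    have hus : u ≤ s := hu.2.2.2 s hts
    have hadj_tu : AdjColor θ (κ t) (κ u) := h.na t u hu.2.2.1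
    rcases eq_or_lt_of_le hus with rfl | hust
    · -- base case: the parent of t is the branch node s
      obtain ⟨s', hsec_s⟩ := h.slant_second h₁
      refine ⟨s', hsec_s.1, ?_, (h.child_mem_gap hu hsec_s).1⟩
      -- t' < s'
      have hcomp : t' ≤ s' ∨ s' ≤ t' := by
        apply h.ac
        rw [hsec.1, hsec_s.1]
        exact hadj_tu
      have hnec : κ t' ≠ κ s' := by
        rw [hsec.1, hsec_s.1]; exact h.adj_ne hadj_tu
      rcases hcomp with hc | hc
      · exact lt_of_le_of_ne hc (fun e => hnec (congrArg κ e))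
      · exfalso
        have hlt : s' < t' := lt_of_le_of_ne hc (fun e => hnec (congrArg κ e.symm))
        have hmem := h.gap_two hs hsec_s (h.child_mem_gap h₁ hsec_s)
          (h.child_mem_gap h₂ hsec_s) hcne t' hlt (lt_trans hsec.2.1 hu.2.2.1.1)
          (by rw [hsec.1]; exact hadj_tu)
        rcases hmem with h' | h'
        · have he : c₁ = t := h.T_inj h₁.1 htT (h' ▸ hsec.1)
          have := hsec.2.1
          rw [h'] at this
          rw [he] at this
          exact lt_irrefl t this
        · have he : c₂ = t := h.T_inj h₂.1 htT (h' ▸ hsec.1)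
          have := hsec.2.1
          rw [h'] at this
          rw [he] at this
          exact lt_irrefl t this
    · -- inductive case: the parent u is still below s
      obtain ⟨usec, husec⟩ := h.slant_second hu
      obtain ⟨pu, hpu, -⟩ := h.parent hu.2.1 hust
      have hJu := IH u hu.2.2.1.1 hu.2.1 hust ⟨t, hu⟩ usec pu husec hpu
      obtain ⟨y, hyc, hy1, hy2⟩ := hJu
      -- gap of u is exactly {t, y}
      have hygap : usec < y ∧ y < u ∧ AdjColor θ (κ y) (κ u) := by
        exact ⟨hy1, hy2, by rw [hyc]; exact h.adj_symm (h.na u pu hpu.2.2.1)⟩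
      have htgap := h.child_mem_gap hu husec
      have htyne : t ≠ y := by
        intro e
        have : κ t = κ pu := by rw [e, hyc]
        have : t = pu := h.T_inj htT hpu.2.1 this
        exact absurd (lt_trans hu.2.2.1.1 hpu.2.2.1.1) (this ▸ lt_irrefl _)
      refine ⟨usec, husec.1, ?_, ?_⟩
      · -- t' < usec
        have hcomp : t' ≤ usec ∨ usec ≤ t' := by
          apply h.ac
          rw [hsec.1, husec.1]; exact hadj_tu
        have hnec : κ t' ≠ κ usec := by
          rw [hsec.1, husec.1]; exact h.adj_ne hadj_tu
        rcases hcomp with hc | hc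
        · exact lt_of_le_of_ne hc (fun e => hnec (congrArg κ e))
        · exfalso
          have hlt : usec < t' := lt_of_le_of_ne hc (fun e => hnec (congrArg κ e.symm))
          have hmem := h.gap_two hu.2.1 husec htgap hygap htyne t' hlt
            (lt_trans hsec.2.1 hu.2.2.1.1) (by rw [hsec.1]; exact hadj_tu)
          rcases hmem with h' | h'
          · have := hsec.2.1
            rw [h'] at this
            exact lt_irrefl t this
          · have hck : κ t = κ pu := by rw [← hsec.1, h', hyc]
            have he : t = pu := h.T_inj htT hpu.2.1 hck
            have hlt2 := lt_trans hu.2.2.1.1 hpu.2.2.1.1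
            rw [he] at hlt2
            exact lt_irrefl pu hlt2
      · -- usec < t
        have hcomp : usec ≤ t ∨ t ≤ usec := by
          apply h.ac
          rw [husec.1]; exact h.adj_symm hadj_tu
        have hnec : κ usec ≠ κ t := by
          rw [husec.1]; exact fun e => h.adj_ne hadj_tu e.symm
        rcases hcomp with hc | hc
        · exact lt_of_le_of_ne hc (fun e => hnec (congrArg κ e))
        · exfalso
          have hlt : t < usec := lt_of_le_of_ne hc (fun e => hnec (congrArg κ e.symm))
          exact absurd (lt_of_lt_of_le husec.2.1 (hu.2.2.2 usec hlt)) (lt_irrefl usec)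

end YC
end YShapeProof4
section YShapeProof5
open Classical Finset
set_option linter.unusedSectionVars false
attribute [local instance] Classical.propDecidable

variable [PartialOrder P] [Fintype P]

namespace YC
variable {θ : Γ → Γ → ℤ} {κ : P → Γ}

end YC

/-- A branch node of the top tree. -/
def Branch (θ : Γ → Γ → ℤ) (κ : P → Γ) (s : P) : Prop :=
  ∃ m₁ m₂, YC.ChildOf θ κ m₁ s ∧ YC.ChildOf θ κ m₂ s ∧ m₁ ≠ m₂

namespace YC
variable {θ : Γ → Γ → ℤ} {κ : P → Γ}

lemma top_in_T {tp : P} (htp : ∀ z, z ≤ tp) : tp ∈ TopTree κ :=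
  fun y _ hlt => absurd (lt_of_lt_of_le hlt (htp y)) (lt_irrefl tp)

lemma no_branch_below (h : YC θ κ) {s w : P} (hbr : Branch θ κ s) (hw : Branch θ κ w)
    (hlt : w < s) : False := by
  obtain ⟨c₁, c₂, h₁, h₂, hcne⟩ := hbr
  obtain ⟨d₁, d₂, g₁, g₂, hdne⟩ := hw
  have hwT : w ∈ TopTree κ := g₁.2.1
  obtain ⟨wsec, hwsec⟩ := h.slant_second g₁
  obtain ⟨pw, hpw, -⟩ := h.parent hwT hlt
  have hJ := h.J_below_branch h₁ h₂ hcne w hwT hlt ⟨d₁, g₁⟩ wsec pw hwsec hpw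
  exact hdne (h.alpha hpw hwsec hJ g₁ g₂)

lemma path_to_child (h : YC θ κ) :
    ∀ t, t ∈ TopTree κ → ∀ w, w ∈ TopTree κ → t < w →
      ∃ c, ChildOf θ κ c w ∧ t ≤ c := by
  have hwf : WellFounded (fun a b : P => b < a) := (Finite.to_wellFoundedGT).wf
  intro t
  induction t using hwf.induction with
  | _ t IH =>
    intro htT w hwT htw
    obtain ⟨u, hu, huw⟩ := h.parent htT htw
    rcases eq_or_lt_of_le huw with rfl | hult
    · exact ⟨t, hu, le_rfl⟩
    · obtain ⟨c, hc, huc⟩ := IH u hu.2.2.1.1 hu.2.1 w hwT hult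
      exact ⟨c, hc, le_trans (le_of_lt hu.2.2.1.1) huc⟩

lemma min_above (h : YC θ κ) {t : P} (ht : t ∈ TopTree κ) (U : Set P)
    (hU : U ⊆ {v | v ∈ TopTree κ ∧ t < v}) (hne : U.Nonempty) :
    ∃ w ∈ U, ∀ v ∈ U, w ≤ v := by
  obtain ⟨w, hwU, hmin⟩ := Set.Finite.exists_minimal_wrt_port id U (Set.toFinite U) hne
  refine ⟨w, hwU, ?_⟩
  intro v hv
  rcases h.upchain t ht w (hU hwU).1 v (hU hv).1 (le_of_lt (hU hwU).2)
    (le_of_lt (hU hv).2) with h1 | h1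
  · exact h1
  · exact le_of_eq (hmin v hv h1)

lemma merge_node (h : YC θ κ) {t s v0 : P}
    (ht : t ∈ TopTree κ) (hs : s ∈ TopTree κ) (hv0 : v0 ∈ TopTree κ)
    (htv : t < v0) (hsv : s < v0) (h1 : ¬ t ≤ s) (h2 : ¬ s ≤ t) :
    ∃ w, Branch θ κ w ∧ t < w ∧ s < w ∧ w ≤ v0 := by
  set U : Set P := {v | v ∈ TopTree κ ∧ t < v ∧ s < v} with hUdef
  have htpU : v0 ∈ U := ⟨hv0, htv, hsv⟩
  obtain ⟨w, hwU, hmin⟩ := h.min_above ht U (fun v hv => ⟨hv.1, hv.2.1⟩) ⟨v0, htpU⟩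
  obtain ⟨c₁, hc₁, htc₁⟩ := h.path_to_child t ht w hwU.1 hwU.2.1
  obtain ⟨c₂, hc₂, hsc₂⟩ := h.path_to_child s hs w hwU.1 hwU.2.2
  have hcne : c₁ ≠ c₂ := by
    intro e
    subst e
    have htc : t < c₁ := by
      rcases eq_or_lt_of_le htc₁ with e2 | e2
      · exfalso; apply h2; rw [e2]; exact hsc₂
      · exact e2
    have hsc : s < c₁ := by
      rcases eq_or_lt_of_le hsc₂ with e2 | e2
      · exfalso; apply h1; rw [e2]; exact htc₁
      · exact e2
    have hmem : c₁ ∈ U := ⟨hc₁.1, htc, hsc⟩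
    exact absurd (lt_of_lt_of_le hc₁.2.2.1.1 (hmin c₁ hmem)) (lt_irrefl c₁)
  exact ⟨w, ⟨c₁, c₂, hc₁, hc₂, hcne⟩, hwU.2.1, hwU.2.2, hmin v0 htpU⟩

lemma branch_unique (h : YC θ κ) {tp s w : P} (htp : ∀ z, z ≤ tp)
    (hs : Branch θ κ s) (hw : Branch θ κ w) : s = w := by
  by_contra hne
  obtain ⟨c₁, -, hc₁, -, -⟩ := id hs
  obtain ⟨d₁, -, hd₁, -, -⟩ := id hw
  have hsT : s ∈ TopTree κ := hc₁.2.1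
  have hwT : w ∈ TopTree κ := hd₁.2.1
  by_cases h1 : s ≤ w
  · exact h.no_branch_below hw hs (lt_of_le_of_ne h1 hne)
  · by_cases h2 : w ≤ s
    · exact h.no_branch_below hs hw (lt_of_le_of_ne h2 (Ne.symm hne))
    · have hwtp : w < tp := lt_of_le_of_ne (htp w) (fun e => h1 (e ▸ htp s))
      have hstp : s < tp := lt_of_le_of_ne (htp s) (fun e => h2 (e ▸ htp w))
      obtain ⟨w', hw', -, hsw', -⟩ := h.merge_node hwT hsT (top_in_T htp)
        hwtp hstp h2 h1
      exact h.no_branch_below hw' hs hsw'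

lemma branch_exists (h : YC θ κ) {tp : P} (htp : ∀ z, z ≤ tp)
    (hnt : (TopTree κ).Nontrivial) : ∃ s, Branch θ κ s := by
  by_contra hnb
  push_neg at hnb
  have huniq : ∀ t c₁ c₂ : P, ChildOf θ κ c₁ t → ChildOf θ κ c₂ t → c₁ = c₂ := by
    intro t c₁ c₂ h₁ h₂
    by_contra hne
    exact hnb t ⟨c₁, c₂, h₁, h₂, hne⟩
  -- the descending invariant
  have hwf : WellFounded (fun a b : P => b < a) := (Finite.to_wellFoundedGT).wf
  have Lclaim : ∀ t, t ∈ TopTree κ → ∀ u, ChildOf θ κ t u →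
      ∃ t' u', IsSecond κ t' t ∧ IsSecond κ u' u ∧ u' < t' := by
    intro t
    induction t using hwf.induction with
    | _ t IH =>
      intro htT u hu
      obtain ⟨u', husec⟩ := h.slant_second hu
      have hgap := h.gap_card hu.2.1 husec
      have htmem : t ∈ Finset.univ.filter
          (fun z : P => u' < z ∧ z < u ∧ AdjColor θ (κ z) (κ u)) := by
        have := h.child_mem_gap hu husec
        simp only [Finset.mem_filter, Finset.mem_univ, true_and]
        exact this
      have herase : ((Finset.univ.filter
          (fun z : P => u' < z ∧ z < u ∧ AdjColor θ (κ z) (κ u))).erase t).Nonempty := by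
        rw [← Finset.card_pos, Finset.card_erase_of_mem htmem, hgap]
        norm_num
      obtain ⟨z, hz⟩ := herase
      have hznet : z ≠ t := Finset.ne_of_mem_erase hz
      have hzmem := Finset.mem_of_mem_erase hz
      simp only [Finset.mem_filter, Finset.mem_univ, true_and] at hzmem
      obtain ⟨hz1, hz2, hz3⟩ := hzmem
      obtain ⟨wz, hwzc, hwzT, hwzle⟩ := h.colorMax (κ z)
      have hwz_adj : AdjColor θ (κ wz) (κ u) := by rw [hwzc]; exact hz3
      have hcomp : wz ≤ u ∨ u ≤ wz := h.ac wz u hwz_adj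
      have hwzne : wz ≠ u := fun e => h.adj_ne hz3 (by rw [← hwzc, e])
      rcases hcomp with hc | hc
      · -- wz < u : wz is a child of u, hence wz = t
        have hlt : wz < u := lt_of_le_of_ne hc hwzne
        have hch : ChildOf θ κ wz u := h.child_of_adj_below hwzT hu.2.1 hlt hwz_adj
        have : wz = t := huniq u wz t hch hu
        have hzc : κ z = κ t := by rw [← hwzc, this]
        obtain ⟨t', htsec⟩ := h.second_exists htT ⟨z, hzc, hznet⟩
        have hzle : z ≤ t' := htsec.2.2 z hzc hznet
        exact ⟨t', u', htsec, husec, lt_of_lt_of_le hz1 hzle⟩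
      · -- u < wz : then wz is the parent of u, contradiction with IH
        exfalso
        have hlt : u < wz := lt_of_le_of_ne hc (Ne.symm hwzne)
        obtain ⟨pu, hpu, -⟩ := h.parent hu.2.1 hlt
        have hwzpu : wz = pu := h.uset_unique hu.2.1 hlt hwz_adj
          hpu.2.2.1.1 (h.adj_symm (h.na u pu hpu.2.2.1))
        obtain ⟨u'', pu', husec'', hpusec, hlt''⟩ :=
          IH u hu.2.2.1.1 hu.2.1 pu hpu
        have hzpu : κ z = κ pu := by rw [← hwzc, hwzpu]
        have hznepu : z ≠ pu :=
          ne_of_lt (lt_trans hz2 hpu.2.2.1.1)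
        have hzle : z ≤ pu' := hpusec.2.2 z hzpu hznepu
        have heq : u'' = u' := h.second_unique husec'' husec
        rw [heq] at hlt''
        exact lt_irrefl z (lt_trans (lt_of_le_of_lt hzle hlt'') hz1)
  -- apply at a minimal element of the top tree
  obtain ⟨x, hx, y, hy, hxy⟩ := hnt
  have htp_T : tp ∈ TopTree κ := top_in_T htp
  have hex : ∃ t0, t0 ∈ TopTree κ ∧ t0 ≠ tp := by
    by_cases hxtp : x = tp
    · exact ⟨y, hy, fun e => hxy (by rw [hxtp, e])⟩
    · exact ⟨x, hx, hxtp⟩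
  obtain ⟨t0, ht0, ht0ne⟩ := hex
  obtain ⟨m, hmT, hmmin⟩ := Set.Finite.exists_minimal_wrt_port id (TopTree κ)
    (Set.toFinite _) ⟨t0, ht0⟩
  have hmne : m ≠ tp := by
    intro e
    have : m = t0 := hmmin t0 ht0 (e ▸ htp t0)
    exact ht0ne (this ▸ e)
  obtain ⟨u, hu, -⟩ := h.parent hmT (lt_of_le_of_ne (htp m) hmne)
  obtain ⟨m', u', hmsec, husec, hlt⟩ := Lclaim m hmT u hu
  have hgap := h.gap_card hmT hmsec
  have hne : (Finset.univ.filter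
      (fun z : P => m' < z ∧ z < m ∧ AdjColor θ (κ z) (κ m))).Nonempty := by
    rw [← Finset.card_pos, hgap]; norm_num
  obtain ⟨z, hz⟩ := hne
  simp only [Finset.mem_filter, Finset.mem_univ, true_and] at hz
  obtain ⟨hz1, hz2, hz3⟩ := hz
  obtain ⟨wz, hwzc, hwzT, hwzle⟩ := h.colorMax (κ z)
  have hwz_adj : AdjColor θ (κ wz) (κ m) := by rw [hwzc]; exact hz3
  have hcomp : wz ≤ m ∨ m ≤ wz := h.ac wz m hwz_adj
  have hwzne : wz ≠ m := fun e => h.adj_ne hz3 (by rw [← hwzc, e])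
  rcases hcomp with hc | hc
  · -- below the minimal element: impossible
    exact hwzne (hmmin wz hwzT hc).symm
  · have hlt2 : m < wz := lt_of_le_of_ne hc (Ne.symm hwzne)
    have hwzu : wz = u := h.uset_unique hmT hlt2 hwz_adj
      hu.2.2.1.1 (h.adj_symm (h.na m u hu.2.2.1))
    have hzu : κ z = κ u := by rw [← hwzc, hwzu]
    have hzneu : z ≠ u := ne_of_lt (lt_trans hz2 hu.2.2.1.1)
    have hzle : z ≤ u' := husec.2.2 z hzu hzneu
    exact lt_irrefl z (lt_trans (lt_of_le_of_lt hzle hlt) hz1)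

end YC
end YShapeProof5
section YShapeProof6
open Classical Finset
set_option linter.unusedSectionVars false
attribute [local instance] Classical.propDecidable

variable [PartialOrder P] [Fintype P]

namespace YC
variable {θ : Γ → Γ → ℤ} {κ : P → Γ}

lemma children_only (h : YC θ κ) {s m₁ m₂ : P} (hm₁ : ChildOf θ κ m₁ s)
    (hm₂ : ChildOf θ κ m₂ s) (hne : m₁ ≠ m₂) :
    ∀ c, ChildOf θ κ c s → c = m₁ ∨ c = m₂ := by
  intro c hc
  obtain ⟨ssec, hssec⟩ := h.slant_second hm₁
  have hcg := h.child_mem_gap hc hssec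
  exact h.gap_two hm₁.2.1 hssec (h.child_mem_gap hm₁ hssec)
    (h.child_mem_gap hm₂ hssec) hne c hcg.1 hcg.2.1 hcg.2.2

lemma coversIn_iff_child (h : YC θ κ) {s x : P} (hs : s ∈ TopTree κ) :
    CoversIn (TopTree κ) x s ↔ ChildOf θ κ x s := by
  constructor
  · intro hcov
    obtain ⟨u, hu, hus⟩ := h.parent hcov.1 hcov.2.2.1
    rcases eq_or_lt_of_le hus with rfl | hlt
    · exact hu
    · exact absurd hlt (hcov.2.2.2 u hu.2.1 hu.2.2.1.1)
  · intro hc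
    refine ⟨hc.1, hc.2.1, hc.2.2.1.1, ?_⟩
    intro z _ hxz hzs
    exact absurd (lt_of_lt_of_le hzs (hc.2.2.2 z hxz)) (lt_irrefl z)

/-- Assembly of the Y-shape data. -/
lemma assemble (h : YC θ κ) {tp s m₁ m₂ : P} (htp : ∀ z, z ≤ tp)
    (hbru : ∀ w, Branch θ κ w → w = s)
    (hm₁ : ChildOf θ κ m₁ s) (hm₂ : ChildOf θ κ m₂ s) (hne : m₁ ≠ m₂)
    (hcard : ({t | t ∈ TopTree κ ∧ t ≤ m₁}).ncard ≤
      ({t | t ∈ TopTree κ ∧ t ≤ m₂}).ncard) :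
    ∃ (i j k : ℕ) (s' : P) (C₁ C₂ : Set P),
      1 ≤ i ∧ 1 ≤ j ∧ j ≤ k ∧ s' ∈ TopTree κ ∧
      IsChain (· ≤ ·) {t ∈ TopTree κ | s' ≤ t} ∧
      ({t ∈ TopTree κ | s' ≤ t}).ncard = i ∧
      (∃ n₁ ∈ C₁, ∃ n₂ ∈ C₂, n₁ ≠ n₂ ∧
        {x : P | CoversIn (TopTree κ) x s'} = {n₁, n₂} ∧
        (∀ d ∈ C₁, d ≤ n₁) ∧ (∀ d ∈ C₂, d ≤ n₂)) ∧
      SaturatedChainIn (TopTree κ) C₁ ∧ SaturatedChainIn (TopTree κ) C₂ ∧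
      Disjoint C₁ C₂ ∧ C₁.ncard = j ∧ C₂.ncard = k ∧
      (∀ c₁ ∈ C₁, ∀ c₂ ∈ C₂, ¬(c₁ ≤ c₂ ∨ c₂ ≤ c₁)) ∧
      TopTree κ = {t ∈ TopTree κ | s' ≤ t} ∪ C₁ ∪ C₂ := by
  have hsT : s ∈ TopTree κ := hm₁.2.1
  set C₁ : Set P := {t | t ∈ TopTree κ ∧ t ≤ m₁} with hC₁def
  set C₂ : Set P := {t | t ∈ TopTree κ ∧ t ≤ m₂} with hC₂def
  -- subtrees are chains
  have hsubchain : ∀ m : P, ChildOf θ κ m s → ∀ a, a ∈ TopTree κ → a ≤ m →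
      ∀ b, b ∈ TopTree κ → b ≤ m → a ≤ b ∨ b ≤ a := by
    intro m hm a haT ham b hbT hbm
    by_contra hcon
    push_neg at hcon
    have hanem : a ≠ m := by
      intro e; exact hcon.2 (e ▸ hbm)
    have hbnem : b ≠ m := by
      intro e; exact hcon.1 (e ▸ ham)
    obtain ⟨w, hw, -, -, hwm⟩ := h.merge_node haT hbT hm.1
      (lt_of_le_of_ne ham hanem) (lt_of_le_of_ne hbm hbnem) hcon.1 hcon.2
    have : w = s := hbru w hw
    rw [this] at hwm
    exact absurd (lt_of_le_of_lt hwm hm.2.2.1.1) (lt_irrefl s)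
  -- cross incomparability
  have hcross : ∀ c₁ ∈ C₁, ∀ c₂ ∈ C₂, ¬(c₁ ≤ c₂ ∨ c₂ ≤ c₁) := by
    intro c₁ hc₁ c₂ hc₂ hcon
    have key : ∀ (ma mb : P), ChildOf θ κ ma s → ChildOf θ κ mb s → ma ≠ mb →
        ∀ a b : P, a ∈ TopTree κ → a ≤ ma → b ∈ TopTree κ → b ≤ mb → ¬ a ≤ b := by
      intro ma mb hma hmb hmne a b haT ham hbT hbm hab
      have hanemb : a ≠ mb := by
        intro e
        exact h.children_incomp hmb hma (Ne.symm hmne) (e ▸ ham)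
      have hamb : a < mb := lt_of_le_of_ne (le_trans hab hbm) hanemb
      have hanema : a ≠ ma := by
        intro e
        exact h.children_incomp hma hmb hmne (e ▸ le_of_lt hamb)
      have hama : a < ma := lt_of_le_of_ne ham hanema
      rcases h.upchain a haT ma hma.1 mb hmb.1 (le_of_lt hama) (le_of_lt hamb)
        with h1 | h1
      · exact h.children_incomp hma hmb hmne h1
      · exact h.children_incomp hmb hma (Ne.symm hmne) h1
    rcases hcon with h1 | h1
    · exact key m₁ m₂ hm₁ hm₂ hne c₁ c₂ hc₁.1 hc₁.2 hc₂.1 hc₂.2 h1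
    · exact key m₂ m₁ hm₂ hm₁ (Ne.symm hne) c₂ c₁ hc₂.1 hc₂.2 hc₁.1 hc₁.2 h1
  refine ⟨({t ∈ TopTree κ | s ≤ t}).ncard, C₁.ncard, C₂.ncard, s, C₁, C₂,
    ?_, ?_, hcard, hsT, ?_, rfl, ?_, ?_, ?_, ?_, rfl, rfl, hcross, ?_⟩
  · -- 1 ≤ i
    have : ({t ∈ TopTree κ | s ≤ t}).Nonempty := ⟨s, hsT, le_rfl⟩
    have := (Set.ncard_pos (Set.toFinite _)).mpr this
    omega
  · -- 1 ≤ j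
    have : C₁.Nonempty := ⟨m₁, hm₁.1, le_rfl⟩
    have := (Set.ncard_pos (Set.toFinite _)).mpr this
    omega
  · -- trunk is a chain
    intro a ha b hb _
    exact h.upchain s hsT a ha.1 b hb.1 ha.2 hb.2
  · -- the two children data
    refine ⟨m₁, ⟨hm₁.1, le_rfl⟩, m₂, ⟨hm₂.1, le_rfl⟩, hne, ?_, ?_, ?_⟩
    · ext x
      simp only [Set.mem_setOf_eq, Set.mem_insert_iff, Set.mem_singleton_iff]
      constructor
      · intro hcov
        exact h.children_only hm₁ hm₂ hne x ((h.coversIn_iff_child hsT).mp hcov)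
      · intro hx
        rcases hx with rfl | rfl
        · exact (h.coversIn_iff_child hsT).mpr hm₁
        · exact (h.coversIn_iff_child hsT).mpr hm₂
    · exact fun d hd => hd.2
    · exact fun d hd => hd.2
  · -- C₁ saturated chain
    refine ⟨fun t ht => ht.1, ?_, ?_⟩
    · intro a ha b hb _
      exact hsubchain m₁ hm₁ a ha.1 ha.2 b hb.1 hb.2
    · intro x hx y hy z hzT hxz hzy
      exact ⟨hzT, le_trans (le_of_lt hzy) hy.2⟩
  · -- C₂ saturated chain
    refine ⟨fun t ht => ht.1, ?_, ?_⟩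
    · intro a ha b hb _
      exact hsubchain m₂ hm₂ a ha.1 ha.2 b hb.1 hb.2
    · intro x hx y hy z hzT hxz hzy
      exact ⟨hzT, le_trans (le_of_lt hzy) hy.2⟩
  · -- disjointness
    rw [Set.disjoint_left]
    intro a ha hb
    exact hcross a ha a hb (Or.inl le_rfl)
  · -- the union decomposition
    ext t
    simp only [Set.mem_union, Set.mem_setOf_eq]
    constructor
    · intro htT
      by_cases h1 : s ≤ t
      · exact Or.inl (Or.inl ⟨htT, h1⟩)
      · by_cases h2 : t ≤ s
        · have hts : t < s := lt_of_le_of_ne h2 (fun e => h1 (e ▸ le_rfl))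
          obtain ⟨c, hc, htc⟩ := h.path_to_child t htT s hsT hts
          rcases h.children_only hm₁ hm₂ hne c hc with rfl | rfl
          · exact Or.inl (Or.inr ⟨htT, htc⟩)
          · exact Or.inr ⟨htT, htc⟩
        · exfalso
          have http : t < tp := lt_of_le_of_ne (htp t)
            (fun e => h1 (by rw [e]; exact htp s))
          have hstp : s < tp := lt_of_le_of_ne (htp s)
            (fun e => h2 (by rw [e]; exact htp t))
          obtain ⟨w, hw, -, hsw, -⟩ := h.merge_node htT hsT (top_in_T htp)
            http hstp h2 h1
          have : w = s := hbru w hw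
          rw [this] at hsw
          exact lt_irrefl s hsw
    · intro ht
      rcases ht with (ht | ht) | ht
      · exact ht.1
      · exact ht.1
      · exact ht.1

end YC
end YShapeProof6
/-- The top tree of a slant irreducible finite Γ-colored d-complete
poset with Γ simply laced and more than one element has shape Y(i;j,k) for some
i ≥ 1 and k ≥ j ≥ 1. -/
theorem topTree_shape_Y [Fintype Γ] [PartialOrder P] [Fintype P] [Nonempty P]
    (θ : Γ → Γ → ℤ) (κ : P → Γ) (hθ : DynkinDatum θ) (hsl : SimplyLaced θ)
    (hdc : GColoredDComplete θ κ) (hsi : SlantIrreducible κ)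
    (hnt : (TopTree κ).Nontrivial) :
    ∃ (i j k : ℕ) (s : P) (C₁ C₂ : Set P),
      1 ≤ i ∧ 1 ≤ j ∧ j ≤ k ∧ s ∈ TopTree κ ∧
      IsChain (· ≤ ·) {t ∈ TopTree κ | s ≤ t} ∧
      ({t ∈ TopTree κ | s ≤ t}).ncard = i ∧
      (∃ m₁ ∈ C₁, ∃ m₂ ∈ C₂, m₁ ≠ m₂ ∧
        {x : P | CoversIn (TopTree κ) x s} = {m₁, m₂} ∧
        (∀ d ∈ C₁, d ≤ m₁) ∧ (∀ d ∈ C₂, d ≤ m₂)) ∧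
      SaturatedChainIn (TopTree κ) C₁ ∧ SaturatedChainIn (TopTree κ) C₂ ∧
      Disjoint C₁ C₂ ∧ C₁.ncard = j ∧ C₂.ncard = k ∧
      (∀ c₁ ∈ C₁, ∀ c₂ ∈ C₂, ¬(c₁ ≤ c₂ ∨ c₂ ≤ c₁)) ∧
      TopTree κ = {t ∈ TopTree κ | s ≤ t} ∪ C₁ ∪ C₂ := by
  have h : YC θ κ := ⟨hθ, hsl, hdc, hsi⟩
  obtain ⟨tp, htp⟩ := h.exists_top
  obtain ⟨s, hbr⟩ := h.branch_exists htp hnt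
  have hbruniq : ∀ w, Branch θ κ w → w = s := fun w hw => h.branch_unique htp hw hbr
  obtain ⟨m₁, m₂, hm₁, hm₂, hne⟩ := hbr
  rcases le_total (({t | t ∈ TopTree κ ∧ t ≤ m₁}).ncard)
      (({t | t ∈ TopTree κ ∧ t ≤ m₂}).ncard) with hle | hle
  · exact h.assemble htp hbruniq hm₁ hm₂ hne hle
  · exact h.assemble htp hbruniq hm₂ hm₁ (Ne.symm hne) hle
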